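/- Let n ≥ 1 and m ≥ 1 be integers. There exist rational functions c_{1,m}, …, c_{m,m} (depending only on m and n), with c_{m,m}(z) = (n·z^{n−1})^{−m}, such that for every open set U ⊆ ℂ, every analytic function f on U, and every z ≠ 0 with z^n ∈ U at which all the c_{p,m} are finite, one has f^{(m)}(z^n) = Σ_{p=1}^{m} c_{p,m}(z)·𝔣^{(p)}(z), where 𝔣(z) = f(z^n). Moreover, if m ≥ 2 then c_{m−1,m}(z)/c_{m,m}(z) → 0 as z → ∞. -/

import Mathlib

open Polynomial Filter

noncomputable def QQ (n : ℕ) : ℕ → ℕ → ℂ[X]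
  | 0, p => if p = 1 then 1 else 0
  | (k+1), p =>
      X * derivative (QQ n k p) - C ((((k+1) * n - 1 : ℕ) : ℂ)) * QQ n k p
        + X * QQ n k (p - 1)

lemma QQ_zero (n k : ℕ) : QQ n k 0 = 0 := by
  induction k with
  | zero => simp [QQ]
  | succ k ih => simp [QQ, ih]

lemma QQ_gt (n : ℕ) : ∀ k p, k + 1 < p → QQ n k p = 0 := by
  intro k
  induction k with
  | zero => intro p hp; simp only [QQ]; rw [if_neg]; omega
  | succ k ih =>
      intro p hp
      have h1 : QQ n k p = 0 := ih p (by omega)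
      have h2 : QQ n k (p - 1) = 0 := ih (p-1) (by omega)
      simp [QQ, h1, h2]

lemma deriv_formula (n : ℕ) (hn : 1 ≤ n) (U : Set ℂ) (hU : IsOpen U)
    (f : ℂ → ℂ) (hf : DifferentiableOn ℂ f U) :
    ∀ (k : ℕ) (z : ℂ), z ≠ 0 → z ^ n ∈ U →
      iteratedDeriv (k+1) f (z ^ n)
        = ∑ p ∈ Finset.Icc 1 (k+1),
            (QQ n k p).eval z / ((n:ℂ)^(k+1) * z ^ ((k+1)*n - 1))
              * iteratedDeriv p (fun w => f (w ^ n)) z := by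
  have hn0 : (n : ℂ) ≠ 0 := Nat.cast_ne_zero.mpr (by omega)
  set g : ℂ → ℂ := fun w => f (w ^ n) with hgdef
  set W : Set ℂ := (fun w : ℂ => w ^ n) ⁻¹' U with hWdef
  have hWopen : IsOpen W := hU.preimage (continuous_pow n)
  have hfa : AnalyticOnNhd ℂ f U := hf.analyticOnNhd hU
  have hpowa : AnalyticOnNhd ℂ (fun w : ℂ => w ^ n) W := by
    intro x _
    exact (analyticAt_id).pow n
  have hga : AnalyticOnNhd ℂ g W :=
    hfa.comp hpowa (fun x hx => hx)
  have hfIter : ∀ j, AnalyticOnNhd ℂ (iteratedDeriv j f) U := by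
    intro j
    rw [iteratedDeriv_eq_iterate]
    exact hfa.iterated_deriv j
  have hgIter : ∀ j, AnalyticOnNhd ℂ (iteratedDeriv j g) W := by
    intro j
    rw [iteratedDeriv_eq_iterate]
    exact hga.iterated_deriv j
  have hgHas : ∀ (j : ℕ) (w : ℂ), w ∈ W →
      HasDerivAt (iteratedDeriv j g) (iteratedDeriv (j+1) g w) w := by
    intro j w hw
    have := ((hgIter j w hw).differentiableAt).hasDerivAt
    rwa [show deriv (iteratedDeriv j g) w = iteratedDeriv (j+1) g w by
      rw [iteratedDeriv_succ]] at this
  have hfHas : ∀ (j : ℕ) (w : ℂ), w ∈ U →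
      HasDerivAt (iteratedDeriv j f) (iteratedDeriv (j+1) f w) w := by
    intro j w hw
    have := ((hfIter j w hw).differentiableAt).hasDerivAt
    rwa [show deriv (iteratedDeriv j f) w = iteratedDeriv (j+1) f w by
      rw [iteratedDeriv_succ]] at this
  intro k
  induction k with
  | zero =>
      intro z hz hzU
      have hfd : HasDerivAt f (deriv f (z^n)) (z^n) :=
        (hf.differentiableAt (hU.mem_nhds hzU)).hasDerivAt
      have hzp : HasDerivAt (fun w : ℂ => w ^ n) ((n:ℂ) * z^(n-1)) z := hasDerivAt_pow n z
      have hgd : HasDerivAt g (deriv f (z^n) * ((n:ℂ) * z^(n-1))) z :=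
        HasDerivAt.comp z hfd hzp
      have h1 : iteratedDeriv 1 g z = deriv f (z^n) * ((n:ℂ) * z^(n-1)) := by
        rw [iteratedDeriv_one]; exact hgd.deriv
      rw [show (0:ℕ)+1 = 1 from rfl, Finset.Icc_self, Finset.sum_singleton, h1,
        iteratedDeriv_one]
      have hQ : QQ n 0 1 = 1 := by simp [QQ]
      rw [hQ]
      have hzn1 : z ^ (n-1) ≠ 0 := pow_ne_zero _ hz
      rw [one_mul, pow_one, eval_one]
      field_simp
  | succ k ih =>
      intro z hz hzU
      set E : ℕ := (k+1) * n with hEdef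
      have hE1 : 1 ≤ E := by
        have : 1 * 1 ≤ (k+1) * n := Nat.mul_le_mul (by omega) hn
        omega
      set A : ℂ := (n:ℂ)^(k+1) with hAdef
      have hA0 : A ≠ 0 := pow_ne_zero _ hn0
      -- the open set S
      set S : Set ℂ := {w : ℂ | w ≠ 0} ∩ W with hSdef
      have hSopen : IsOpen S := (isOpen_ne).inter hWopen
      have hzS : z ∈ S := ⟨hz, hzU⟩
      -- alternative representation of the sum
      set G : ℂ → ℂ := fun w =>
        ∑ p ∈ Finset.Icc 1 (k+1),
          (w * (QQ n k p).eval w) / (A * w ^ E) * iteratedDeriv p g w with hGdef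
      set F : ℂ → ℂ := fun w => iteratedDeriv (k+1) f (w ^ n) with hFdef
      have hFG : ∀ w ∈ S, F w = G w := by
        intro w hw
        rw [hFdef]
        simp only []
        rw [ih w hw.1 hw.2]
        refine Finset.sum_congr rfl fun p _ => ?_
        congr 1
        have hw0 : w ≠ 0 := hw.1
        have : w ^ E = w ^ (E - 1) * w := by
          rw [← pow_succ]
          congr 1
          omega
        rw [this]
        field_simp
      have hFGev : F =ᶠ[nhds z] G :=
        Filter.eventuallyEq_of_mem (hSopen.mem_nhds hzS) hFG
      -- derivative of F
      have hzp : HasDerivAt (fun w : ℂ => w ^ n) ((n:ℂ) * z^(n-1)) z := hasDerivAt_pow n z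
      have hFd : HasDerivAt F (iteratedDeriv (k+2) f (z^n) * ((n:ℂ) * z^(n-1))) z :=
        HasDerivAt.comp z (hfHas (k+1) (z^n) hzU) hzp
      -- derivative of G
      have hden : ∀ p : ℕ, HasDerivAt (fun w : ℂ => A * w ^ E) (A * ((E:ℂ) * z^(E-1))) z :=
        fun p => (hasDerivAt_pow E z).const_mul A
      have hdenne : A * z ^ E ≠ 0 := mul_ne_zero hA0 (pow_ne_zero _ hz)
      have hGd : HasDerivAt G (∑ p ∈ Finset.Icc 1 (k+1),
          (((1 * (QQ n k p).eval z + z * (derivative (QQ n k p)).eval z) * (A * z ^ E)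
              - z * (QQ n k p).eval z * (A * ((E:ℂ) * z^(E-1)))) / (A * z ^ E)^2
            * iteratedDeriv p g z
          + (z * (QQ n k p).eval z) / (A * z ^ E) * iteratedDeriv (p+1) g z)) z := by
        apply HasDerivAt.fun_sum
        intro p _
        have hnum : HasDerivAt (fun w : ℂ => w * (QQ n k p).eval w)
            (1 * (QQ n k p).eval z + z * (derivative (QQ n k p)).eval z) z :=
          (hasDerivAt_id z).mul (Polynomial.hasDerivAt (QQ n k p) z)
        exact ((hnum.div (hden p) hdenne)).mul (hgHas p z hzU)
      -- the main equation
      have E0 : iteratedDeriv (k+2) f (z^n) * ((n:ℂ) * z^(n-1))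
          = ∑ p ∈ Finset.Icc 1 (k+1),
          (((1 * (QQ n k p).eval z + z * (derivative (QQ n k p)).eval z) * (A * z ^ E)
              - z * (QQ n k p).eval z * (A * ((E:ℂ) * z^(E-1)))) / (A * z ^ E)^2
            * iteratedDeriv p g z
          + (z * (QQ n k p).eval z) / (A * z ^ E) * iteratedDeriv (p+1) g z) := by
        rw [← hFd.deriv, ← hGd.deriv]
        exact hFGev.deriv_eq
      -- the per-term algebraic identity
      have hcast : (((k+1)*n - 1 : ℕ) : ℂ) = (E:ℂ) - 1 := by
        rw [Nat.cast_sub hE1]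
        simp [hEdef]
      have hkey : ∀ p : ℕ,
          (QQ n (k+1) p).eval z / ((n:ℂ)^(k+1+1) * z^((k+1+1)*n - 1)) * ((n:ℂ) * z^(n-1))
          = (((1 * (QQ n k p).eval z + z * (derivative (QQ n k p)).eval z) * (A * z ^ E)
              - z * (QQ n k p).eval z * (A * ((E:ℂ) * z^(E-1)))) / (A * z ^ E)^2
            + (z * (QQ n k (p-1)).eval z) / (A * z ^ E)) := by
        intro p
        have hQs : (QQ n (k+1) p).eval z
            = z * (derivative (QQ n k p)).eval z - ((E:ℂ) - 1) * (QQ n k p).eval z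
              + z * (QQ n k (p-1)).eval z := by
          show (X * derivative (QQ n k p) - C ((((k+1) * n - 1 : ℕ) : ℂ)) * QQ n k p
            + X * QQ n k (p - 1)).eval z = _
          rw [eval_add, eval_sub, eval_mul, eval_mul, eval_mul, eval_X, eval_C, hcast]
        have hzE : z ^ E = z ^ (E-1) * z := by
          rw [← pow_succ]
          congr 1
          omega
        have hzE2 : z ^ ((k+1+1)*n - 1) = z ^ (E-1) * z * z^(n-1) := by
          rw [← pow_succ, ← pow_add]
          congr 1
          have h2 : (k+1+1)*n = E + n := by rw [hEdef]; ring
          omega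
        have hA2 : (n:ℂ)^(k+1+1) = A * n := by rw [hAdef, pow_succ]
        rw [hQs, hzE, hzE2, hA2]
        have hy : z^(E-1) ≠ 0 := pow_ne_zero _ hz
        have hzn : z^(n-1) ≠ 0 := pow_ne_zero _ hz
        have hEc : (E:ℂ) = ((E-1 : ℕ):ℂ) + 1 := by
          rw [Nat.cast_sub hE1]; ring
        field_simp
        ring
      -- now assemble
      have hw0 : (n:ℂ) * z^(n-1) ≠ 0 := mul_ne_zero hn0 (pow_ne_zero _ hz)
      refine mul_right_cancel₀ hw0 ?_
      rw [E0, Finset.sum_mul]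
      symm
      calc ∑ p ∈ Finset.Icc 1 (k+1+1),
            (QQ n (k+1) p).eval z / ((n:ℂ)^(k+1+1) * z^((k+1+1)*n - 1))
              * iteratedDeriv p g z * ((n:ℂ) * z^(n-1))
          = ∑ p ∈ Finset.Icc 1 (k+1+1),
            ((((1 * (QQ n k p).eval z + z * (derivative (QQ n k p)).eval z) * (A * z ^ E)
                - z * (QQ n k p).eval z * (A * ((E:ℂ) * z^(E-1)))) / (A * z ^ E)^2)
              * iteratedDeriv p g z
            + (z * (QQ n k (p-1)).eval z) / (A * z ^ E) * iteratedDeriv p g z) := by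
            refine Finset.sum_congr rfl fun p _ => ?_
            rw [mul_right_comm, hkey p, add_mul]
        _ = (∑ p ∈ Finset.Icc 1 (k+1+1),
              (((1 * (QQ n k p).eval z + z * (derivative (QQ n k p)).eval z) * (A * z ^ E)
                - z * (QQ n k p).eval z * (A * ((E:ℂ) * z^(E-1)))) / (A * z ^ E)^2)
              * iteratedDeriv p g z)
            + ∑ p ∈ Finset.Icc 1 (k+1+1),
              (z * (QQ n k (p-1)).eval z) / (A * z ^ E) * iteratedDeriv p g z := by
            rw [Finset.sum_add_distrib]
        _ = (∑ p ∈ Finset.Icc 1 (k+1),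
              (((1 * (QQ n k p).eval z + z * (derivative (QQ n k p)).eval z) * (A * z ^ E)
                - z * (QQ n k p).eval z * (A * ((E:ℂ) * z^(E-1)))) / (A * z ^ E)^2)
              * iteratedDeriv p g z)
            + ∑ p ∈ Finset.Icc 1 (k+1),
              (z * (QQ n k p).eval z) / (A * z ^ E) * iteratedDeriv (p+1) g z := by
            congr 1
            · rw [Finset.sum_Icc_succ_top (by omega : 1 ≤ k+1+1)]
              rw [QQ_gt n k (k+1+1) (by omega)]
              simp
            · have hsplit : Finset.Icc 1 (k+1+1) = insert 1 (Finset.Icc 2 (k+1+1)) := by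
                ext x
                simp only [Finset.mem_Icc, Finset.mem_insert]
                omega
              rw [hsplit, Finset.sum_insert (by simp)]
              rw [show (1:ℕ) - 1 = 0 from rfl, QQ_zero]
              simp only [eval_zero, mul_zero, zero_mul, zero_div, zero_add]
              have hmap : Finset.Icc 2 (k+1+1)
                  = (Finset.Icc 1 (k+1)).map (addRightEmbedding 1) := by
                rw [Finset.map_add_right_Icc]
              rw [hmap, Finset.sum_map]
              refine Finset.sum_congr rfl fun p _ => ?_
              simp [addRightEmbedding]
        _ = ∑ p ∈ Finset.Icc 1 (k+1),
            ((((1 * (QQ n k p).eval z + z * (derivative (QQ n k p)).eval z) * (A * z ^ E)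
                - z * (QQ n k p).eval z * (A * ((E:ℂ) * z^(E-1)))) / (A * z ^ E)^2)
              * iteratedDeriv p g z
            + (z * (QQ n k p).eval z) / (A * z ^ E) * iteratedDeriv (p+1) g z) := by
            rw [Finset.sum_add_distrib]

lemma QQ_top (n : ℕ) : ∀ k, QQ n k (k+1) = X ^ k := by
  intro k
  induction k with
  | zero => simp [QQ]
  | succ k ih =>
      have h1 : QQ n k (k+2) = 0 := QQ_gt n k (k+2) (by omega)
      simp [QQ, h1, ih, pow_succ, mul_comm]


lemma QQ_coeff (n : ℕ) : ∀ k p i, p ≤ i → (QQ n k p).coeff i = 0 := by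
  intro k
  induction k with
  | zero =>
      intro p i hpi
      simp only [QQ]
      split
      · rename_i h
        subst h
        rw [coeff_one, if_neg (by omega)]
      · simp
  | succ k ih =>
      intro p i hpi
      rcases Nat.eq_zero_or_pos p with rfl | hp
      · simp [QQ_zero]
      obtain ⟨j, rfl⟩ : ∃ j, i = j + 1 := ⟨i - 1, by omega⟩
      simp only [QQ, coeff_add, coeff_sub, coeff_X_mul, coeff_C_mul, coeff_derivative]
      rw [ih p (j+1) (by omega), ih (p-1) j (by omega)]
      ring


lemma eval₂_id_eq (p : ℂ[X]) (z : ℂ) : p.eval₂ (RingHom.id ℂ) z = p.eval z := rfl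

lemma ratfunc_eval_div (p q : ℂ[X]) (z : ℂ) (hq : q.eval z ≠ 0) :
    RatFunc.eval (RingHom.id ℂ) z
      (algebraMap ℂ[X] (RatFunc ℂ) p / algebraMap ℂ[X] (RatFunc ℂ) q)
      = p.eval z / q.eval z := by
  have hq0 : q ≠ 0 := fun h => hq (by simp [h])
  set r := algebraMap ℂ[X] (RatFunc ℂ) p / algebraMap ℂ[X] (RatFunc ℂ) q with hr
  have hnum : r.num * q = p * r.denom := (RatFunc.num_mul_eq_mul_denom_iff hq0).mpr rfl
  have hdvd : r.denom ∣ q := RatFunc.denom_div_dvd p q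
  obtain ⟨t, ht⟩ := hdvd
  have hden : r.denom.eval z ≠ 0 := by
    intro h
    apply hq
    rw [ht, eval_mul, h, zero_mul]
  have := congrArg (Polynomial.eval z) hnum
  simp only [eval_mul] at this
  rw [RatFunc.eval, eval₂_id_eq, eval₂_id_eq, div_eq_div_iff hden hq, this]

lemma cm_formula (n m : ℕ) (hn : 1 ≤ n) (hm : 1 ≤ m) :
    algebraMap ℂ[X] (RatFunc ℂ) (X ^ (m-1)) /
      algebraMap ℂ[X] (RatFunc ℂ) (Polynomial.C ((n:ℂ)^m) * X ^ (m*n-1))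
      = (RatFunc.C (n : ℂ) * RatFunc.X ^ (n - 1))⁻¹ ^ m := by
  have hn0 : (n : ℂ) ≠ 0 := Nat.cast_ne_zero.mpr (by omega)
  have harith : m - 1 + (n - 1) * m = m * n - 1 := by
    have h2 : m * (n - 1) + m = m * n := by
      rw [← Nat.mul_succ]; congr 1; omega
    have h3 : (n-1) * m = m * (n-1) := Nat.mul_comm _ _
    omega
  have key : (X:ℂ[X])^(m-1) * (Polynomial.C (n:ℂ) * X^(n-1))^m
      = Polynomial.C ((n:ℂ)^m) * X^(m*n-1) := by
    rw [mul_pow, ← C_pow, ← pow_mul, ← mul_assoc, mul_comm ((X:ℂ[X])^(m-1)), mul_assoc,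
      ← pow_add, harith]
  have hX : algebraMap ℂ[X] (RatFunc ℂ) ((X:ℂ[X])^(m-1)) ≠ 0 :=
    RatFunc.algebraMap_ne_zero (pow_ne_zero _ X_ne_zero)
  rw [← key, map_mul, div_mul_cancel_left₀ hX, map_pow, map_mul, RatFunc.algebraMap_C,
    map_pow, RatFunc.algebraMap_X, ← inv_pow]

lemma tendsto_inv_pow_cocompact (k : ℕ) (hk : 1 ≤ k) :
    Tendsto (fun z : ℂ => (z ^ k)⁻¹) (cocompact ℂ) (nhds 0) := by
  rw [tendsto_zero_iff_norm_tendsto_zero]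
  have h1 : Tendsto (fun z : ℂ => ‖z‖ ^ k) (cocompact ℂ) atTop :=
    (tendsto_pow_atTop (by omega)).comp tendsto_norm_cocompact_atTop
  have := tendsto_inv_atTop_zero.comp h1
  refine this.congr fun z => ?_
  simp [norm_pow]

lemma tendsto_poly_div_pow (P : ℂ[X]) (M : ℕ) (hM : 1 ≤ M)
    (hP : ∀ i, M ≤ i → P.coeff i = 0) :
    Tendsto (fun z : ℂ => P.eval z / z ^ M) (cocompact ℂ) (nhds 0) := by
  have hdeg : P.natDegree < M := by
    by_cases h0 : P = 0
    · simp [h0]; omega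
    · by_contra h
      exact (leadingCoeff_ne_zero.mpr h0) (hP _ (by omega))
  have heval : ∀ z : ℂ, P.eval z / z ^ M
      = ∑ i ∈ Finset.range M, P.coeff i * z ^ i / z ^ M := by
    intro z
    rw [eval_eq_sum_range' hdeg, Finset.sum_div]
  simp only [heval]
  rw [show (0:ℂ) = ∑ i ∈ Finset.range M, 0 by simp]
  refine tendsto_finset_sum _ fun i hi => ?_
  have hi' : i < M := Finset.mem_range.mp hi
  have hne : {z : ℂ | z ≠ 0} ∈ cocompact ℂ :=
    mem_cocompact.mpr ⟨{0}, isCompact_singleton, fun z hz => hz⟩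
  have hcong : ∀ᶠ z in cocompact ℂ,
      P.coeff i * (z ^ (M - i))⁻¹ = P.coeff i * z ^ i / z ^ M := by
    filter_upwards [hne] with z hz
    rw [mul_div_assoc]
    congr 1
    rw [eq_div_iff (pow_ne_zero _ hz), inv_mul_eq_div, div_eq_iff (pow_ne_zero _ hz),
      ← pow_add]
    congr 1
    omega
  refine Tendsto.congr' hcong ?_
  have := (tendsto_inv_pow_cocompact (M - i) (by omega)).const_mul (P.coeff i)
  simpa using this


/-- Lemma 9.1, change of variables `z ↦ zⁿ`: there are rational
functions `c_{p,m}` with `c_{m,m}(z) = (n z^{n−1})^{−m}` such that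
`f^{(m)}(zⁿ) = Σ_{p=1}^m c_{p,m}(z) 𝔣^{(p)}(z)`, where `𝔣(z) = f(zⁿ)`;
moreover `c_{m−1,m}/c_{m,m} → 0` at infinity when `m ≥ 2`. -/
theorem change_of_variables_derivatives
    (n m : ℕ) (hn : 1 ≤ n) (hm : 1 ≤ m) :
    ∃ c : ℕ → RatFunc ℂ,
      c m = (RatFunc.C (n : ℂ) * RatFunc.X ^ (n - 1))⁻¹ ^ m ∧
      (∀ U : Set ℂ, IsOpen U → ∀ f : ℂ → ℂ, DifferentiableOn ℂ f U →
        ∀ z : ℂ, z ≠ 0 → z ^ n ∈ U →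
        (∀ p : ℕ, 1 ≤ p → p ≤ m → (c p).denom.eval z ≠ 0) →
        iteratedDeriv m f (z ^ n)
          = ∑ p ∈ Finset.Icc 1 m,
              RatFunc.eval (RingHom.id ℂ) z (c p)
                * iteratedDeriv p (fun w => f (w ^ n)) z) ∧
      (2 ≤ m → Filter.Tendsto
        (fun z : ℂ => RatFunc.eval (RingHom.id ℂ) z (c (m - 1))
          / RatFunc.eval (RingHom.id ℂ) z (c m))
        (Filter.cocompact ℂ) (nhds 0)) := by
  obtain ⟨k, rfl⟩ : ∃ k, m = k + 1 := ⟨m - 1, by omega⟩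
  have hn0 : (n : ℂ) ≠ 0 := Nat.cast_ne_zero.mpr (by omega)
  set D : ℂ[X] := Polynomial.C ((n:ℂ)^(k+1)) * X ^ ((k+1)*n - 1) with hDdef
  have hDeval : ∀ z : ℂ, z ≠ 0 → D.eval z = (n:ℂ)^(k+1) * z ^ ((k+1)*n - 1) := by
    intro z hz
    simp [hDdef]
  have hDne : ∀ z : ℂ, z ≠ 0 → D.eval z ≠ 0 := by
    intro z hz
    rw [hDeval z hz]
    exact mul_ne_zero (pow_ne_zero _ hn0) (pow_ne_zero _ hz)
  refine ⟨fun p => algebraMap ℂ[X] (RatFunc ℂ) (QQ n k p) / algebraMap ℂ[X] (RatFunc ℂ) D,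
    ?_, ?_, ?_⟩
  · show algebraMap ℂ[X] (RatFunc ℂ) (QQ n k (k+1)) / algebraMap ℂ[X] (RatFunc ℂ) D
        = (RatFunc.C (n : ℂ) * RatFunc.X ^ (n - 1))⁻¹ ^ (k + 1)
    rw [QQ_top, hDdef]
    have := cm_formula n (k+1) hn (by omega)
    rw [show (k+1) - 1 = k from rfl] at this
    exact this
  · intro U hU f hf z hz hzU _
    rw [deriv_formula n hn U hU f hf k z hz hzU]
    refine Finset.sum_congr rfl fun p _ => ?_
    rw [ratfunc_eval_div _ _ _ (hDne z hz), hDeval z hz]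
  · intro hm2
    have hk1 : 1 ≤ k := by omega
    have hne : {z : ℂ | z ≠ 0} ∈ Filter.cocompact ℂ :=
      Filter.mem_cocompact.mpr ⟨{0}, isCompact_singleton, fun z hz => hz⟩
    have hcong : ∀ᶠ z in Filter.cocompact ℂ,
        (QQ n k k).eval z / z ^ k
          = RatFunc.eval (RingHom.id ℂ) z
              (algebraMap ℂ[X] (RatFunc ℂ) (QQ n k (k + 1 - 1))
                / algebraMap ℂ[X] (RatFunc ℂ) D)
            / RatFunc.eval (RingHom.id ℂ) z
              (algebraMap ℂ[X] (RatFunc ℂ) (QQ n k (k + 1)) / algebraMap ℂ[X] (RatFunc ℂ) D) := by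
      filter_upwards [hne] with z hz
      rw [ratfunc_eval_div _ _ _ (hDne z hz), ratfunc_eval_div _ _ _ (hDne z hz),
        div_div_div_comm, div_self (hDne z hz), div_one, QQ_top,
        show (k + 1 - 1 : ℕ) = k from rfl]
      simp
    refine Filter.Tendsto.congr' hcong ?_
    exact tendsto_poly_div_pow (QQ n k k) k hk1 (fun i hi => QQ_coeff n k k i hi)
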